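/- arXiv:2006.13709 — 2 statements merged into one kernel-verified Lean document; each statement's English description precedes it below -/
import Mathlib

section
/- Let W be a finite-dimensional real vector space, V = ℂ ⊗_ℝ W its complexification, and c : V → V the conjugation, i.e. the ℂ-antilinear involution determined by c(z ⊗ w) = conj(z) ⊗ w. Suppose F ⊆ V is a complex subspace such that V = F ⊕ c(F), let ι : W → V be the map w ↦ 1 ⊗ w, and let L ⊆ W be a full lattice (a discrete additive subgroup whose ℝ-span is all of W). Then the quotient topological additive group V/(F + ι(L)) (the quotient of V by the subgroup generated by F and ι(L), with the quotient topology) is a compact Hausdorff topological group. -/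
open TensorProduct

theorem lattice_cover_aux {E : Type*} [NormedAddCommGroup E] [NormedSpace ℝ E]
    [FiniteDimensional ℝ E] (L : Submodule ℤ E) [DiscreteTopology L]
    (hL : Submodule.span ℝ (L : Set E) = ⊤) :
    ∃ K : Set E, IsCompact K ∧ ∀ x : E, ∃ k ∈ K, x - k ∈ L := by
  haveI : IsZLattice ℝ L := ⟨hL⟩
  let b := (Module.Free.chooseBasis ℤ L).ofZLatticeBasis ℝ L
  refine ⟨closure (ZSpan.fundamentalDomain b),
    (ZSpan.fundamentalDomain_isBounded b).isCompact_closure, fun x => ?_⟩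
  refine ⟨ZSpan.fract b x, subset_closure (ZSpan.fract_mem_fundamentalDomain b x), ?_⟩
  have h1 : x - ZSpan.fract b x = (ZSpan.floor b x : E) := by
    rw [ZSpan.fract_apply]; abel
  rw [h1]
  have hsp := (Module.Free.chooseBasis ℤ L).ofZLatticeBasis_span ℝ
  exact (Submodule.ext_iff.mp hsp _).mp (SetLike.coe_mem _)

/-- Let `W` be a finite-dimensional real vector space (with its standard
topology), `V = ℂ ⊗[ℝ] W` its complexification (likewise topologized), and `c : V → V` the
conjugation determined by `c (z ⊗ w) = conj z ⊗ w`.  Suppose `F ⊆ V` is a complex subspace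
with `V = F ⊕ c(F)`, let `ι : W → V` be `w ↦ 1 ⊗ w`, and let `L ⊆ W` be a full lattice
(a discrete additive subgroup whose ℝ-span is all of `W`).  Then the quotient topological
additive group `V/(F + ι(L))` (the quotient of `V` by the subgroup generated by `F` and
`ι(L)`, with the quotient topology) is a compact Hausdorff topological group. -/
theorem stmt2 (W : Type*) [AddCommGroup W] [Module ℝ W] [FiniteDimensional ℝ W]
    [TopologicalSpace W] [IsTopologicalAddGroup W] [ContinuousSMul ℝ W] [T2Space W]
    [TopologicalSpace (ℂ ⊗[ℝ] W)] [IsTopologicalAddGroup (ℂ ⊗[ℝ] W)]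
    [ContinuousSMul ℝ (ℂ ⊗[ℝ] W)] [T2Space (ℂ ⊗[ℝ] W)]
    (c : (ℂ ⊗[ℝ] W) →ₗ[ℝ] (ℂ ⊗[ℝ] W))
    (hc : ∀ (z : ℂ) (w : W), c (z ⊗ₜ[ℝ] w) = (starRingEnd ℂ z) ⊗ₜ[ℝ] w)
    (F cF : Submodule ℂ (ℂ ⊗[ℝ] W))
    (hcF : (cF : Set (ℂ ⊗[ℝ] W)) = c '' (F : Set (ℂ ⊗[ℝ] W)))
    (hcompl : IsCompl F cF)
    (L : AddSubgroup W) [DiscreteTopology L]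
    (hL : Submodule.span ℝ (L : Set W) = ⊤)
    -- `S` is the subgroup `F + ι(L)` of `V` generated by `F` and `ι(L)`
    (S : AddSubgroup (ℂ ⊗[ℝ] W))
    (hS : S = (F.restrictScalars ℝ).toAddSubgroup ⊔
      AddSubgroup.map ((TensorProduct.mk ℝ ℂ W) 1).toAddMonoidHom L) :
    CompactSpace ((ℂ ⊗[ℝ] W) ⧸ S) ∧ T2Space ((ℂ ⊗[ℝ] W) ⧸ S) ∧
      IsTopologicalAddGroup ((ℂ ⊗[ℝ] W) ⧸ S) := by
  set ι : W →ₗ[ℝ] (ℂ ⊗[ℝ] W) := (TensorProduct.mk ℝ ℂ W) 1 with hι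
  have hιapp : ∀ w : W, ι w = (1 : ℂ) ⊗ₜ[ℝ] w := fun w => rfl
  -- c is an involution
  have hcc : ∀ v : ℂ ⊗[ℝ] W, c (c v) = v := by
    intro v
    induction v using TensorProduct.induction_on with
    | zero => simp
    | tmul z w => rw [hc, hc]; simp
    | add x y hx hy => rw [map_add, map_add, hx, hy]
  -- ι(w) is fixed by c
  have hfix : ∀ w : W, c (ι w) = ι w := by
    intro w; rw [hιapp, hc]; simp
  -- a left inverse of ι, so ι is injective
  have hr : ∃ r : (ℂ ⊗[ℝ] W) →ₗ[ℝ] W, ∀ w, r (ι w) = w := by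
    refine ⟨TensorProduct.lift ((LinearMap.lsmul ℝ W).comp Complex.reLm), fun w => ?_⟩
    rw [hιapp, TensorProduct.lift.tmul]
    simp
  obtain ⟨r, hr⟩ := hr
  have hinj : Function.Injective ι := Function.LeftInverse.injective hr
  -- images under c
  have hFc : ∀ v ∈ F, c v ∈ cF := by
    intro v hv
    have : c v ∈ (cF : Set (ℂ ⊗[ℝ] W)) := by rw [hcF]; exact ⟨v, hv, rfl⟩
    exact this
  have hcFc : ∀ v ∈ cF, c v ∈ F := by
    intro v hv
    have : v ∈ (cF : Set (ℂ ⊗[ℝ] W)) := hv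
    rw [hcF] at this
    obtain ⟨x, hx, rfl⟩ := this
    rw [hcc]; exact hx
  -- kernel fact
  have hkerF : ∀ w : W, ι w ∈ F → w = 0 := by
    intro w hw
    have h2 : ι w ∈ cF := by rw [← hfix w]; exact hFc _ hw
    have h3 : ι w ∈ F ⊓ cF := ⟨hw, h2⟩
    rw [hcompl.inf_eq_bot, Submodule.mem_bot] at h3
    have := hinj (h3.trans (map_zero ι).symm)
    exact this
  -- v + c v is in the range of ι
  have hreal : ∀ v : ℂ ⊗[ℝ] W, ∃ w : W, v + c v = ι w := by
    have hp : (⊤ : Submodule ℝ (ℂ ⊗[ℝ] W)) ≤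
        Submodule.comap ((LinearMap.id : (ℂ ⊗[ℝ] W) →ₗ[ℝ] (ℂ ⊗[ℝ] W)) + c) (LinearMap.range ι) := by
      rw [← TensorProduct.span_tmul_eq_top ℝ ℂ W, Submodule.span_le]
      rintro _ ⟨z, w, rfl⟩
      simp only [SetLike.mem_coe, Submodule.mem_comap, LinearMap.add_apply, LinearMap.id_apply]
      refine ⟨(2 * z.re) • w, ?_⟩
      rw [map_smul, hιapp, TensorProduct.smul_tmul', hc, ← TensorProduct.add_tmul]
      congr 1
      rw [Complex.add_conj, Complex.real_smul, mul_one]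
    intro v
    obtain ⟨w, hw⟩ := hp (Submodule.mem_top (x := v))
    exact ⟨w, hw.symm⟩
  -- every element of V is congruent to some ι w modulo F
  have hmodF : ∀ v : ℂ ⊗[ℝ] W, ∃ w : W, v - ι w ∈ F := by
    intro v
    have hv : v ∈ F ⊔ cF := by rw [hcompl.sup_eq_top]; trivial
    obtain ⟨x, hx, y, hy, hxy⟩ := Submodule.mem_sup.mp hv
    obtain ⟨w, hw⟩ := hreal y
    refine ⟨w, ?_⟩
    have : v - ι w = x - c y := by rw [← hxy, ← hw]; abel
    rw [this]
    exact sub_mem hx (hcFc _ hy)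
  -- membership in S
  have hSmem : ∀ v : ℂ ⊗[ℝ] W, v ∈ S ↔ ∃ l ∈ L, v - ι l ∈ F := by
    intro v
    rw [hS, AddSubgroup.mem_sup]
    constructor
    · rintro ⟨a, ha, b, ⟨l, hl, rfl⟩, rfl⟩
      refine ⟨l, hl, ?_⟩
      have h1 : a ∈ F := by simpa using ha
      simpa [add_sub_cancel_right] using h1
    · rintro ⟨l, hl, h⟩
      exact ⟨v - ι l, h, ι l, ⟨l, hl, rfl⟩, by abel⟩
  -- the quotient by F
  set Fr : Submodule ℝ (ℂ ⊗[ℝ] W) := F.restrictScalars ℝ with hFr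
  haveI : FiniteDimensional ℝ (ℂ ⊗[ℝ] W) := Module.Finite.tensorProduct ℝ ℂ W
  haveI hFrClosed : IsClosed (Fr : Set (ℂ ⊗[ℝ] W)) := Fr.closed_of_finiteDimensional
  set f : W →ₗ[ℝ] (ℂ ⊗[ℝ] W) ⧸ Fr := Fr.mkQ ∘ₗ ι with hf
  have hfker : LinearMap.ker f = ⊥ := by
    rw [LinearMap.ker_eq_bot']
    intro w hw
    have : ι w ∈ Fr := by
      rwa [hf, LinearMap.comp_apply, Submodule.mkQ_apply, Submodule.Quotient.mk_eq_zero] at hw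
    exact hkerF w this
  -- S is closed
  have hLclosed : IsClosed (L : Set W) := AddSubgroup.isClosed_of_discrete
  have hSclosed : IsClosed (S : Set (ℂ ⊗[ℝ] W)) := by
    have hemb := LinearMap.isClosedEmbedding_of_injective hfker
    have himgcl : IsClosed (f '' (L : Set W)) := hemb.isClosedMap _ hLclosed
    have hset : (S : Set (ℂ ⊗[ℝ] W)) = Fr.mkQ ⁻¹' (f '' (L : Set W)) := by
      ext v
      simp only [Set.mem_preimage, Set.mem_image, SetLike.mem_coe]
      rw [hSmem]
      constructor
      · rintro ⟨l, hl, h⟩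
        refine ⟨l, hl, ?_⟩
        rw [hf, LinearMap.comp_apply, Submodule.mkQ_apply, Submodule.mkQ_apply,
          eq_comm, Submodule.Quotient.eq]
        exact h
      · rintro ⟨l, hl, h⟩
        refine ⟨l, hl, ?_⟩
        rw [hf, LinearMap.comp_apply, Submodule.mkQ_apply, Submodule.mkQ_apply,
          eq_comm, Submodule.Quotient.eq] at h
        exact h
    rw [hset]
    exact himgcl.preimage (Submodule.isOpenQuotientMap_mkQ Fr).continuous
  haveI : IsClosed (S : Set (ℂ ⊗[ℝ] W)) := hSclosed
  refine ⟨?_, inferInstance, inferInstance⟩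
  -- compactness
  obtain ⟨e⟩ : Nonempty (W ≃L[ℝ] EuclideanSpace ℝ (Fin (Module.finrank ℝ W))) :=
    FiniteDimensional.nonempty_continuousLinearEquiv_of_finrank_eq (by simp)
  set E := EuclideanSpace ℝ (Fin (Module.finrank ℝ W)) with hE
  set LE : Submodule ℤ E :=
    (AddSubgroup.toIntSubmodule L).comap
      (((e.symm : E →L[ℝ] W) : E →ₗ[ℝ] W).restrictScalars ℤ) with hLEdef
  haveI : DiscreteTopology LE :=
    DiscreteTopology.preimage_of_continuous_injective (L : Set W) e.symm.continuous
      e.symm.injective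
  have hLEspan : Submodule.span ℝ (LE : Set E) = ⊤ := by
    have h2 : Submodule.map ((e : W →L[ℝ] E) : W →ₗ[ℝ] E) (Submodule.span ℝ (L : Set W)) ≤
        Submodule.span ℝ (LE : Set E) := by
      rw [Submodule.map_span]
      apply Submodule.span_mono
      rintro _ ⟨l, hl, rfl⟩
      show e.symm (e l) ∈ L
      simpa using hl
    rw [hL, Submodule.map_top] at h2
    refine top_unique (le_trans ?_ h2)
    rintro x -
    exact ⟨e.symm x, by simp⟩
  obtain ⟨K, hK, hcov⟩ := lattice_cover_aux LE hLEspan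
  let g : E → (ℂ ⊗[ℝ] W) ⧸ S := fun x => QuotientAddGroup.mk (ι (e.symm x))
  have hgc : Continuous g :=
    QuotientAddGroup.continuous_mk.comp
      ((ι.continuous_of_finiteDimensional).comp e.symm.continuous)
  have huniv : (Set.univ : Set ((ℂ ⊗[ℝ] W) ⧸ S)) = g '' K := by
    apply Set.eq_of_subset_of_subset _ (Set.subset_univ _)
    intro q _
    obtain ⟨v, rfl⟩ := QuotientAddGroup.mk_surjective q
    obtain ⟨w, hw⟩ := hmodF v
    obtain ⟨k, hk, hxk⟩ := hcov (e w)
    refine ⟨k, hk, ?_⟩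
    show QuotientAddGroup.mk (ι (e.symm k)) = QuotientAddGroup.mk v
    rw [QuotientAddGroup.eq]
    have hlL : e.symm (e w - k) ∈ L := hxk
    have key : -(ι (e.symm k)) + v = (v - ι w) + ι (e.symm (e w - k)) := by
      rw [map_sub, map_sub]
      simp only [ContinuousLinearEquiv.symm_apply_apply]
      abel
    rw [key]
    refine AddSubgroup.add_mem _ ?_ ?_
    · rw [hS]
      exact AddSubgroup.mem_sup_left (show v - ι w ∈ Fr from hw)
    · rw [hS]
      exact AddSubgroup.mem_sup_right ⟨_, hlL, rfl⟩
  exact ⟨by rw [huniv]; exact hK.image hgc⟩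
end

section
/- Let W be a finite-dimensional real vector space, V = ℂ ⊗_ℝ W its complexification, and c : V → V the conjugation, i.e. the ℂ-antilinear involution determined by c(z ⊗ w) = conj(z) ⊗ w. Suppose F ⊆ V is a complex subspace such that V = F ⊕ c(F). Let H_ℝ ⊆ W be a real subspace and let H = ℂ ⊗_ℝ H_ℝ ⊆ V be its complexification (a c-stable complex subspace of V). If the ℝ-linear map H_ℝ → H/(F ∩ H) sending h to the class of 1 ⊗ h is bijective, then H = (F ∩ H) ⊕ (c(F) ∩ H) as complex subspaces; that is, the subspace F ∩ H defines a pure Hodge structure of weight −1 on H_ℝ. -/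
open TensorProduct

/-- The inclusion `ι : W → ℂ ⊗[ℝ] W`, `w ↦ 1 ⊗ w`. -/
noncomputable def incl (W : Type*) [AddCommGroup W] [Module ℝ W] :
    W →ₗ[ℝ] ℂ ⊗[ℝ] W :=
  (TensorProduct.mk ℝ ℂ W) 1

/-- The complexification `H = ℂ ⊗[ℝ] H_ℝ` of a real subspace `H_ℝ ⊆ W`, realized as the
complex subspace of `V = ℂ ⊗[ℝ] W` spanned by `ι(H_ℝ)`. -/
noncomputable def cxSub {W : Type*} [AddCommGroup W] [Module ℝ W] (Hr : Submodule ℝ W) :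
    Submodule ℂ (ℂ ⊗[ℝ] W) :=
  Submodule.span ℂ (incl W '' (Hr : Set W))

/-- The ℝ-linear map `H_ℝ → H/(F ∩ H)` sending `h` to the class of `1 ⊗ h` modulo
`F ∩ H` (with `H = ℂ ⊗[ℝ] H_ℝ ⊆ V` and `F ∩ H` viewed as a subspace of `H`). -/
noncomputable def toHQuot {W : Type*} [AddCommGroup W] [Module ℝ W] (Hr : Submodule ℝ W)
    (F : Submodule ℂ (ℂ ⊗[ℝ] W)) (h : Hr) :
    (cxSub Hr) ⧸ ((F ⊓ cxSub Hr).comap (cxSub Hr).subtype) :=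
  Submodule.Quotient.mk
    ⟨incl W h.1, Submodule.subset_span (Set.mem_image_of_mem _ h.2)⟩

lemma c_smul {W : Type*} [AddCommGroup W] [Module ℝ W] (c : (ℂ ⊗[ℝ] W) →ₗ[ℝ] (ℂ ⊗[ℝ] W))
    (hc : ∀ (z : ℂ) (w : W), c (z ⊗ₜ[ℝ] w) = (starRingEnd ℂ z) ⊗ₜ[ℝ] w)
    (z : ℂ) (v : ℂ ⊗[ℝ] W) : c (z • v) = (starRingEnd ℂ z) • c v := by
  induction v using TensorProduct.induction_on with
  | zero => simp
  | tmul w u =>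
    rw [smul_tmul', smul_eq_mul, hc, hc, smul_tmul', smul_eq_mul, map_mul]
  | add x y hx hy => rw [smul_add, map_add, hx, hy, map_add, smul_add]

lemma c_invol {W : Type*} [AddCommGroup W] [Module ℝ W] (c : (ℂ ⊗[ℝ] W) →ₗ[ℝ] (ℂ ⊗[ℝ] W))
    (hc : ∀ (z : ℂ) (w : W), c (z ⊗ₜ[ℝ] w) = (starRingEnd ℂ z) ⊗ₜ[ℝ] w)
    (v : ℂ ⊗[ℝ] W) : c (c v) = v := by
  induction v using TensorProduct.induction_on with
  | zero => simp
  | tmul w u => simp [hc]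
  | add x y hx hy => rw [map_add, map_add, hx, hy]

lemma c_mem_cxSub {W : Type*} [AddCommGroup W] [Module ℝ W] (c : (ℂ ⊗[ℝ] W) →ₗ[ℝ] (ℂ ⊗[ℝ] W))
    (hc : ∀ (z : ℂ) (w : W), c (z ⊗ₜ[ℝ] w) = (starRingEnd ℂ z) ⊗ₜ[ℝ] w)
    (Hr : Submodule ℝ W) {x : ℂ ⊗[ℝ] W} (hx : x ∈ cxSub Hr) :
    c x ∈ cxSub Hr := by
  induction hx using Submodule.span_induction with
  | mem y hy =>
    obtain ⟨h, hh, rfl⟩ := hy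
    have : incl W h = (1 : ℂ) ⊗ₜ[ℝ] h := rfl
    rw [this, hc]
    simpa [← this, cxSub] using Submodule.subset_span (Set.mem_image_of_mem (incl W) hh)
  | zero => simp
  | add x y hx hy hx' hy' => rw [map_add]; exact Submodule.add_mem _ hx' hy'
  | smul z x hx hx' =>
    rw [c_smul c hc]; exact Submodule.smul_mem _ _ hx'


/-- Let `W` be a finite-dimensional real vector space, `V = ℂ ⊗[ℝ] W` its
complexification, and `c : V → V` the conjugation determined by `c (z ⊗ w) = conj z ⊗ w`.
Suppose `F ⊆ V` is a complex subspace with `V = F ⊕ c(F)`.  Let `H_ℝ ⊆ W` be a real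
subspace and `H = ℂ ⊗[ℝ] H_ℝ ⊆ V` its complexification.  If the ℝ-linear map
`H_ℝ → H/(F ∩ H)`, `h ↦ [1 ⊗ h]`, is bijective, then `H = (F ∩ H) ⊕ (c(F) ∩ H)` as complex
subspaces; that is, `F ∩ H` defines a pure Hodge structure of weight `-1` on `H_ℝ`. -/
theorem stmt3 (W : Type*) [AddCommGroup W] [Module ℝ W] [FiniteDimensional ℝ W]
    (c : (ℂ ⊗[ℝ] W) →ₗ[ℝ] (ℂ ⊗[ℝ] W))
    (hc : ∀ (z : ℂ) (w : W), c (z ⊗ₜ[ℝ] w) = (starRingEnd ℂ z) ⊗ₜ[ℝ] w)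
    (F cF : Submodule ℂ (ℂ ⊗[ℝ] W))
    (hcF : (cF : Set (ℂ ⊗[ℝ] W)) = c '' (F : Set (ℂ ⊗[ℝ] W)))
    (hcompl : IsCompl F cF)
    (Hr : Submodule ℝ W)
    (hbij : Function.Bijective (toHQuot Hr F)) :
    (F ⊓ cxSub Hr) ⊓ (cF ⊓ cxSub Hr) = ⊥ ∧
      (F ⊓ cxSub Hr) ⊔ (cF ⊓ cxSub Hr) = cxSub Hr := by
  constructor
  · rw [eq_bot_iff]
    rintro x hx
    rw [Submodule.mem_inf, Submodule.mem_inf, Submodule.mem_inf] at hx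
    have : x ∈ F ⊓ cF := ⟨hx.1.1, hx.2.1⟩
    rw [hcompl.inf_eq_bot] at this
    exact this
  · refine le_antisymm (sup_le inf_le_right inf_le_right) ?_
    intro x hx
    induction hx using Submodule.span_induction with
    | zero => exact Submodule.zero_mem _
    | add a b ha hb ha' hb' => exact Submodule.add_mem _ ha' hb'
    | smul z a ha ha' => exact Submodule.smul_mem _ _ ha'
    | mem y hy =>
      obtain ⟨h, hh, rfl⟩ := hy
      -- the element I ⊗ h lies in H
      have hIh : (Complex.I ⊗ₜ[ℝ] h : ℂ ⊗[ℝ] W) ∈ cxSub Hr := by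
        have : (Complex.I ⊗ₜ[ℝ] h : ℂ ⊗[ℝ] W) = Complex.I • incl W h := by
          rw [show incl W h = (1 : ℂ) ⊗ₜ[ℝ] h from rfl, smul_tmul', smul_eq_mul, mul_one]
        rw [this]
        exact Submodule.smul_mem _ _
          (Submodule.subset_span (Set.mem_image_of_mem (incl W) hh))
      obtain ⟨h', hh'⟩ := hbij.2 (Submodule.Quotient.mk ⟨Complex.I ⊗ₜ[ℝ] h, hIh⟩)
      rw [toHQuot, Submodule.Quotient.eq, Submodule.mem_comap] at hh'
      have gmem : incl W (h' : W) - Complex.I ⊗ₜ[ℝ] h ∈ F ⊓ cxSub Hr := hh'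
      set g : ℂ ⊗[ℝ] W := incl W (h' : W) - Complex.I ⊗ₜ[ℝ] h with hg
      have hcg : c g = incl W (h' : W) + Complex.I ⊗ₜ[ℝ] h := by
        rw [hg, map_sub, show incl W (h' : W) = (1 : ℂ) ⊗ₜ[ℝ] (h' : W) from rfl,
          hc, hc]
        simp [sub_neg_eq_add, TensorProduct.neg_tmul, Complex.conj_I]
      have hcgmem : c g ∈ cF ⊓ cxSub Hr := by
        refine ⟨?_, c_mem_cxSub c hc Hr gmem.2⟩
        have : c g ∈ c '' (F : Set (ℂ ⊗[ℝ] W)) := Set.mem_image_of_mem c gmem.1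
        rw [← hcF] at this
        exact this
      have key : c g - g = (Complex.I + Complex.I) ⊗ₜ[ℝ] h := by
        rw [hcg, hg]
        rw [TensorProduct.add_tmul]
        abel
      have hne : (Complex.I + Complex.I) ≠ 0 := by
        simp [← two_mul, Complex.I_ne_zero]
      have : incl W h = (Complex.I + Complex.I)⁻¹ • (c g - g) := by
        rw [key, smul_tmul', smul_eq_mul, inv_mul_cancel₀ hne]
        rfl
      rw [this]
      refine Submodule.smul_mem _ _ (Submodule.sub_mem _ ?_ ?_)
      · exact Submodule.mem_sup_right hcgmem
      · exact Submodule.mem_sup_left gmem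
end
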